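/- arXiv:1611.07223 — 6 statements merged into one kernel-verified Lean document; each statement's English description precedes it below -/
import Mathlib

section
/- Let (M, ρ) be a complete separable metric space and let Φ : [0,∞) × M → M be a semiflow such that, in addition, x ↦ Φ(T,x) is continuous for every T ≥ 0. For each n ∈ ℕ let (Pⁿ_t)_{t≥0} be a family of Markov (probability) kernels on M and let μₙ be a stationary probability measure for (Pⁿ_t), i.e. ∫ Pⁿ_t(x,A) μₙ(dx) = μₙ(A) for all t ≥ 0 and Borel A. Assume the probability-convergence hypothesis: for every compact set K ⊆ M, every T > 0 and every δ > 0, lim_{n→∞} sup_{x∈K} Pⁿ_T(x, {y ∈ M : ρ(y, Φ(T,x)) ≥ δ}) = 0. If μₙ converges weakly to a probability measure μ, then μ is Φ-invariant, i.e. μ(Φ(t,·)⁻¹(A)) = μ(A) for every Borel set A and every t ≥ 0, and moreover μ(B(Φ)) = 1, where B(Φ) is the Birkhoff center of Φ. -/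
open MeasureTheory Topology Filter Set

/-- The ω-limit set of a point `x` under the semiflow `Φ`:
`ω(x) = {y | for every neighborhood U of y and every k ∈ ℕ, ∃ s ≥ k with Φ s x ∈ U}`. -/
def omegaLimitSet {M : Type*} [TopologicalSpace M] (Φ : ℝ → M → M) (x : M) : Set M :=
  {y | ∀ U ∈ nhds y, ∀ k : ℕ, ∃ s : ℝ, (k : ℝ) ≤ s ∧ Φ s x ∈ U}

/-- The Birkhoff center of the semiflow `Φ`: the closure of the set of recurrent points. -/
def birkhoffCenter {M : Type*} [TopologicalSpace M] (Φ : ℝ → M → M) : Set M :=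
  closure {x | x ∈ omegaLimitSet Φ x}

open Metric
open scoped ENNReal NNReal

lemma aux_tight {M : Type*} [MetricSpace M] [CompleteSpace M] [TopologicalSpace.SeparableSpace M]
    [MeasurableSpace M] [BorelSpace M] [Nonempty M]
    (μseq : ℕ → Measure M) (hprob : ∀ n, IsProbabilityMeasure (μseq n))
    (μ : Measure M) [hPμ : IsProbabilityMeasure μ]
    (hweak : ∀ g : BoundedContinuousFunction M ℝ,
      Tendsto (fun n : ℕ => ∫ x, g x ∂(μseq n)) atTop (𝓝 (∫ x, g x ∂μ))) :
    ∀ ε : ℝ≥0∞, 0 < ε → ∃ K : Set M, IsCompact K ∧ ∀ n, μseq n Kᶜ ≤ ε := by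
  intro ε hε
  have hweak' := (MeasureTheory.ProbabilityMeasure.tendsto_iff_forall_integral_tendsto
      (μs := fun n => (⟨μseq n, hprob n⟩ : ProbabilityMeasure M))
      (μ := ⟨μ, hPμ⟩)).mpr fun g => hweak g
  set u := TopologicalSpace.denseSeq M with hu_def
  have hu : DenseRange u := TopologicalSpace.denseRange_denseSeq M
  set V : ℕ → ℕ → Set M := fun m N => ⋃ i ∈ Finset.range N, Metric.ball (u i) (1 / (m + 1))
    with hV
  have hVopen : ∀ m N, IsOpen (V m N) := fun m N => isOpen_biUnion fun i _ => Metric.isOpen_ball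
  have hVmono : ∀ m, Monotone (V m) := by
    intro m N N' h
    exact Set.biUnion_subset_biUnion_left (Finset.range_subset_range.mpr h)
  have hrpos : ∀ m : ℕ, 0 < 1 / ((m : ℝ) + 1) := by
    intro m; positivity
  have hVunion : ∀ m, (⋃ N, V m N) = Set.univ := by
    intro m
    ext x; simp only [Set.mem_iUnion, Set.mem_univ, iff_true]
    obtain ⟨i, hi⟩ := Metric.denseRange_iff.mp hu x (1 / (m + 1)) (hrpos m)
    exact ⟨i + 1, Set.mem_biUnion (Finset.mem_range.mpr (Nat.lt_succ_self i))
      (Metric.mem_ball.mpr hi)⟩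
  have hlim : ∀ ν : Measure M, IsProbabilityMeasure ν →
      ∀ m, Tendsto (fun N => ν (V m N)) atTop (𝓝 1) := by
    intro ν hν m
    have := tendsto_measure_iUnion_atTop (μ := ν) (hVmono m)
    rwa [hVunion m, measure_univ] at this
  have key : ∀ m : ℕ, ∀ η : ℝ≥0∞, 0 < η → ∃ N, ∀ n, μseq n (V m N)ᶜ ≤ η := by
    intro m η hη
    rcases le_or_gt 1 η with h1 | h1
    · exact ⟨0, fun n => le_trans prob_le_one h1⟩
    have hgt : (1 : ℝ≥0∞) - η < 1 := ENNReal.sub_lt_self ENNReal.one_ne_top one_ne_zero hη.ne'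
    have hcompl : ∀ n N, 1 - η < μseq n (V m N) → μseq n (V m N)ᶜ ≤ η := by
      intro n N h
      have := hprob n
      rw [prob_compl_eq_one_sub (hVopen m N).measurableSet]
      calc 1 - μseq n (V m N) ≤ 1 - (1 - η) := tsub_le_tsub_left h.le 1
        _ = η := ENNReal.sub_sub_cancel ENNReal.one_ne_top h1.le
    -- eventual bound from portmanteau
    obtain ⟨N₀, hN₀⟩ := ((hlim μ hPμ m).eventually (eventually_gt_nhds hgt)).exists
    have hport := MeasureTheory.ProbabilityMeasure.le_liminf_measure_open_of_tendsto hweak'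
      (hVopen m N₀)
    have hev : ∀ᶠ n in atTop, 1 - η < μseq n (V m N₀) :=
      Filter.eventually_lt_of_lt_liminf (lt_of_lt_of_le hN₀ hport)
    obtain ⟨n₀, hn₀⟩ := eventually_atTop.mp hev
    have hsm : ∀ n : ℕ, ∃ Nn, 1 - η < μseq n (V m Nn) := fun n =>
      ((hlim (μseq n) (hprob n) m).eventually (eventually_gt_nhds hgt)).exists
    choose f hf using hsm
    refine ⟨max N₀ ((Finset.range n₀).sup f), fun n => ?_⟩
    rcases le_or_gt n₀ n with h | h
    · exact hcompl n _ (lt_of_lt_of_le (hn₀ n h)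
        (measure_mono (hVmono m (le_max_left _ _))))
    · refine hcompl n _ (lt_of_lt_of_le (hf n) (measure_mono (hVmono m ?_)))
      exact le_trans (Finset.le_sup (Finset.mem_range.mpr h)) (le_max_right _ _)
  have hηpos : ∀ m : ℕ, (0 : ℝ≥0∞) < ε * 2⁻¹ ^ (m + 1) := by
    intro m
    exact ENNReal.mul_pos hε.ne' (pow_ne_zero _ (ENNReal.inv_ne_zero.mpr ENNReal.ofNat_ne_top))
  choose N hN using fun m => key m (ε * 2⁻¹ ^ (m + 1)) (hηpos m)
  refine ⟨⋂ m, closure (V m (N m)), ?_, ?_⟩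
  · refine TotallyBounded.isCompact_of_isClosed ?_ (isClosed_iInter fun m => isClosed_closure)
    refine Metric.totallyBounded_iff.mpr fun δ hδ => ?_
    obtain ⟨m, hm⟩ := exists_nat_one_div_lt (half_pos hδ)
    refine ⟨u '' (Finset.range (N m)), (Set.toFinite _).image u |>.subset (subset_refl _), ?_⟩
    have hsub : closure (V m (N m)) ⊆ ⋃ y ∈ u '' (Finset.range (N m)), Metric.ball y δ := by
      rw [hV]
      have : closure (⋃ i ∈ Finset.range (N m), Metric.ball (u i) (1 / (m + 1)))
          ⊆ ⋃ i ∈ Finset.range (N m), closure (Metric.ball (u i) (1 / (m + 1))) := by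
        rw [Finset.closure_biUnion]
      refine this.trans ?_
      refine Set.iUnion₂_subset fun i hi => ?_
      refine subset_trans (Metric.closure_ball_subset_closedBall) ?_
      refine subset_trans (Metric.closedBall_subset_ball (lt_trans hm (half_lt_self hδ))) ?_
      exact Set.subset_biUnion_of_mem (u := fun y => Metric.ball y δ)
        (Set.mem_image_of_mem _ (Finset.mem_coe.mpr hi))
    exact subset_trans (Set.iInter_subset _ m) hsub
  · intro n
    have hsub : (⋂ m, closure (V m (N m)))ᶜ ⊆ ⋃ m, (V m (N m))ᶜ := by
      rw [Set.compl_iInter]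
      exact Set.iUnion_mono fun m => Set.compl_subset_compl.mpr subset_closure
    calc μseq n (⋂ m, closure (V m (N m)))ᶜ ≤ μseq n (⋃ m, (V m (N m))ᶜ) := measure_mono hsub
      _ ≤ ∑' m, μseq n (V m (N m))ᶜ := measure_iUnion_le _
      _ ≤ ∑' m : ℕ, ε * 2⁻¹ ^ (m + 1) := ENNReal.tsum_le_tsum fun m => hN m n
      _ = ε := by
        rw [ENNReal.tsum_mul_left]
        have : ∑' m : ℕ, (2⁻¹ : ℝ≥0∞) ^ (m + 1) = 1 := by
          simp_rw [pow_succ]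
          rw [ENNReal.tsum_mul_right, ENNReal.tsum_geometric]
          rw [ENNReal.one_sub_inv_two, inv_inv]
          exact ENNReal.mul_inv_cancel two_ne_zero ENNReal.ofNat_ne_top
        rw [this, mul_one]

lemma aux_inv {M : Type*} [MetricSpace M] [CompleteSpace M] [TopologicalSpace.SeparableSpace M]
    [MeasurableSpace M] [BorelSpace M]
    (Φ : ℝ → M → M)
    (hcont_x : ∀ T : ℝ, 0 ≤ T → Continuous (Φ T))
    (P : ℕ → ℝ → ProbabilityTheory.Kernel M M)
    (hP : ∀ n : ℕ, ∀ t : ℝ, ProbabilityTheory.IsMarkovKernel (P n t))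
    (μseq : ℕ → Measure M)
    (hprob : ∀ n : ℕ, IsProbabilityMeasure (μseq n))
    (hstat : ∀ n : ℕ, ∀ t : ℝ, 0 ≤ t → ∀ A : Set M, MeasurableSet A →
      ∫⁻ x, P n t x A ∂(μseq n) = μseq n A)
    (hpc : ∀ K : Set M, IsCompact K → ∀ T : ℝ, 0 < T → ∀ δ : ℝ, 0 < δ →
      Filter.Tendsto (fun n : ℕ => ⨆ x ∈ K, P n T x {y : M | δ ≤ dist y (Φ T x)})
        Filter.atTop (nhds 0))
    (μ : Measure M) [hPμ : IsProbabilityMeasure μ]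
    (hweak : ∀ g : BoundedContinuousFunction M ℝ,
      Filter.Tendsto (fun n : ℕ => ∫ x, g x ∂(μseq n)) Filter.atTop (nhds (∫ x, g x ∂μ)))
    (t : ℝ) (ht : 0 < t)
    (gF : M → ℝ) (hgc : Continuous gF) (hg0 : ∀ x, 0 ≤ gF x) (hg1 : ∀ x, gF x ≤ 1)
    (L : ℝ) (hL : 0 < L) (hLip : ∀ x y, |gF x - gF y| ≤ L * dist x y) :
    ∫ x, gF (Φ t x) ∂μ = ∫ x, gF x ∂μ := by
  have hne : Nonempty M := by
    by_contra h
    rw [not_nonempty_iff] at h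
    have h1 : μ Set.univ = 1 := measure_univ
    rw [Set.univ_eq_empty_iff.mpr h, measure_empty] at h1
    exact zero_ne_one h1
  have hΦc : Continuous (Φ t) := hcont_x t ht.le
  have hgnorm : ∀ x, ‖gF x‖ ≤ 1 := fun x => by
    rw [Real.norm_eq_abs, abs_of_nonneg (hg0 x)]; exact hg1 x
  set gB : BoundedContinuousFunction M ℝ :=
    .ofNormedAddCommGroup gF hgc 1 hgnorm with hgB
  set gB' : BoundedContinuousFunction M ℝ :=
    .ofNormedAddCommGroup (fun x => gF (Φ t x)) (hgc.comp hΦc) 1 (fun x => hgnorm _) with hgB'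
  have hA : Tendsto (fun n => ∫ x, gF x ∂μseq n) atTop (𝓝 (∫ x, gF x ∂μ)) := hweak gB
  have hB : Tendsto (fun n => ∫ x, gF (Φ t x) ∂μseq n) atTop (𝓝 (∫ x, gF (Φ t x) ∂μ)) :=
    hweak gB'
  have hdiff : Tendsto (fun n => |∫ x, gF (Φ t x) ∂μseq n - ∫ x, gF x ∂μseq n|) atTop
      (𝓝 |∫ x, gF (Φ t x) ∂μ - ∫ x, gF x ∂μ|) := (hB.sub hA).abs
  suffices h : ∀ ε : ℝ, 0 < ε → |∫ x, gF (Φ t x) ∂μ - ∫ x, gF x ∂μ| ≤ ε by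
    have h0 : |∫ x, gF (Φ t x) ∂μ - ∫ x, gF x ∂μ| ≤ 0 := by
      by_contra hcon
      push_neg at hcon
      linarith [h (|∫ x, gF (Φ t x) ∂μ - ∫ x, gF x ∂μ| / 2) (by linarith)]
    have h1 := abs_nonneg (∫ x, gF (Φ t x) ∂μ - ∫ x, gF x ∂μ)
    have := abs_eq_zero.mp (le_antisymm h0 h1)
    linarith
  intro ε hε
  set δ : ℝ := ε / (4 * L) with hδdef
  have hδ : 0 < δ := by positivity
  -- tightness
  obtain ⟨K, hK, hKtight⟩ := aux_tight μseq hprob μ hweak (ENNReal.ofReal (ε / 8))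
    (ENNReal.ofReal_pos.mpr (by positivity))
  -- eventual smallness of the kernel suprema
  have hev : ∀ᶠ n in atTop,
      (⨆ x ∈ K, P n t x {y : M | δ ≤ dist y (Φ t x)}) < ENNReal.ofReal (ε / 8) :=
    (hpc K hK t ht δ hδ).eventually (eventually_lt_nhds (ENNReal.ofReal_pos.mpr (by positivity)))
  refine le_of_tendsto hdiff ?_
  filter_upwards [hev] with n hsup
  haveI := hP n t
  haveI := hprob n
  have hgm : Measurable fun y => ENNReal.ofReal (gF y) := hgc.measurable.ennreal_ofReal
  -- stationarity at the level of integrals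
  have hbind : (μseq n).bind (fun x => P n t x) = μseq n := by
    ext A hA
    rw [Measure.bind_apply hA (ProbabilityTheory.Kernel.measurable _).aemeasurable]
    exact hstat n t ht.le A hA
  set Fn : M → ℝ := fun x => (∫⁻ y, ENNReal.ofReal (gF y) ∂(P n t x)).toReal with hFn
  have hlint_le : ∀ x : M, (∫⁻ y, ENNReal.ofReal (gF y) ∂(P n t x)) ≤ 1 := by
    intro x
    calc ∫⁻ y, ENNReal.ofReal (gF y) ∂(P n t x) ≤ ∫⁻ _, 1 ∂(P n t x) :=
          lintegral_mono fun y => ENNReal.ofReal_le_one.mpr (hg1 y)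
      _ = 1 := by simp
  have hlint_ne_top : ∀ x : M, (∫⁻ y, ENNReal.ofReal (gF y) ∂(P n t x)) ≠ ∞ :=
    fun x => (lt_of_le_of_lt (hlint_le x) ENNReal.one_lt_top).ne
  have hFn_meas : Measurable Fn := (Measurable.lintegral_kernel hgm).ennreal_toReal
  have hFn_int : ∀ x, Fn x = ∫ y, gF y ∂(P n t x) := by
    intro x
    rw [integral_eq_lintegral_of_nonneg_ae (ae_of_all _ hg0) hgc.aestronglyMeasurable]
  have hFn_nonneg : ∀ x, 0 ≤ Fn x := fun x => ENNReal.toReal_nonneg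
  have hFn_le_one : ∀ x, Fn x ≤ 1 := by
    intro x
    have := ENNReal.toReal_mono ENNReal.one_ne_top (hlint_le x)
    simpa using this
  have key1 : ∫ x, gF x ∂μseq n = ∫ x, Fn x ∂μseq n := by
    rw [integral_eq_lintegral_of_nonneg_ae (ae_of_all _ hg0) hgc.aestronglyMeasurable]
    rw [integral_eq_lintegral_of_nonneg_ae (ae_of_all _ hFn_nonneg)
      hFn_meas.aestronglyMeasurable]
    congr 1
    conv_lhs => rw [← hbind]
    rw [Measure.lintegral_bind (ProbabilityTheory.Kernel.measurable _).aemeasurable hgm.aemeasurable]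
    refine lintegral_congr fun x => ?_
    rw [hFn, ENNReal.ofReal_toReal (hlint_ne_top x)]
  -- pointwise estimate
  have hpt : ∀ x : M, |gF (Φ t x) - Fn x| ≤
      2 * (P n t x {y : M | δ ≤ dist y (Φ t x)}).toReal + L * δ := by
    intro x
    set ν : Measure M := P n t x with hν
    haveI : IsProbabilityMeasure ν := inferInstance
    set z := Φ t x with hz
    have hBadm : MeasurableSet {y : M | δ ≤ dist y z} :=
      (isClosed_le continuous_const (continuous_id.dist continuous_const)).measurableSet
    have hint_g : Integrable gF ν :=
      (integrable_const (1 : ℝ)).mono' hgc.aestronglyMeasurable (ae_of_all _ hgnorm)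
    have heq : gF z - Fn x = ∫ y, (gF z - gF y) ∂ν := by
      rw [integral_sub (integrable_const _) hint_g, integral_const]
      simp [hFn_int x]
      rfl
    rw [heq]
    have hind : Integrable (Set.indicator {y : M | δ ≤ dist y z} (fun _ => (2 : ℝ))) ν :=
      (integrable_const (2 : ℝ)).indicator hBadm
    have hle : ∀ y, |gF z - gF y| ≤
        Set.indicator {y : M | δ ≤ dist y z} (fun _ => (2 : ℝ)) y + L * δ := by
      intro y
      rcases le_or_gt δ (dist y z) with hmem | hmem
      · have hmem' : y ∈ {y : M | δ ≤ dist y z} := hmem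
        rw [Set.indicator_of_mem hmem']
        have := abs_sub_abs_le_abs_sub (gF z) (gF y)
        calc |gF z - gF y| ≤ |gF z| + |gF y| := abs_sub (gF z) (gF y)
          _ ≤ 1 + 1 := add_le_add (hgnorm z) (hgnorm y)
          _ ≤ 2 + L * δ := by nlinarith
      · rw [Set.indicator_of_notMem (by simpa using not_le.mpr hmem)]
        calc |gF z - gF y| ≤ L * dist z y := hLip z y
          _ ≤ L * δ := by rw [dist_comm]; exact mul_le_mul_of_nonneg_left hmem.le hL.le
          _ ≤ 0 + L * δ := by linarith
    calc |∫ y, (gF z - gF y) ∂ν| ≤ ∫ y, |gF z - gF y| ∂ν := by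
          simpa [Real.norm_eq_abs] using norm_integral_le_integral_norm (μ := ν)
            (fun y => gF z - gF y)
      _ ≤ ∫ y, (Set.indicator {y : M | δ ≤ dist y z} (fun _ => (2 : ℝ)) y + L * δ) ∂ν := by
          refine integral_mono ((integrable_const _).sub hint_g).abs
            (hind.add (integrable_const _)) hle
      _ = 2 * (ν {y : M | δ ≤ dist y z}).toReal + L * δ := by
          rw [integral_add hind (integrable_const _), integral_indicator_const _ hBadm,
            integral_const]
          simp [mul_comm]
          rfl
  -- outer estimate
  set β : M → ℝ≥0∞ := fun x => P n t x {y : M | δ ≤ dist y (Φ t x)} with hβ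
  have hβm : Measurable β := by
    have hS : MeasurableSet {p : M × M | δ ≤ dist p.2 (Φ t p.1)} :=
      (isClosed_le continuous_const (continuous_snd.dist (hΦc.comp continuous_fst))).measurableSet
    exact ProbabilityTheory.Kernel.measurable_kernel_prodMk_left hS
  have hβ1 : ∀ x, β x ≤ 1 := fun x => prob_le_one
  have hβtoReal : ∀ x, (β x).toReal ≤ 1 := fun x => by
    have := ENNReal.toReal_mono ENNReal.one_ne_top (hβ1 x)
    simpa using this
  have hβint : Integrable (fun x => (β x).toReal) (μseq n) :=
    (integrable_const (1 : ℝ)).mono' hβm.ennreal_toReal.aestronglyMeasurable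
      (ae_of_all _ fun x => by
        rw [Real.norm_eq_abs, abs_of_nonneg ENNReal.toReal_nonneg]; exact hβtoReal x)
  have hgΦint : Integrable (fun x => gF (Φ t x)) (μseq n) :=
    (integrable_const (1 : ℝ)).mono' (hgc.comp hΦc).aestronglyMeasurable
      (ae_of_all _ fun x => hgnorm _)
  have hFnint : Integrable Fn (μseq n) :=
    (integrable_const (1 : ℝ)).mono' hFn_meas.aestronglyMeasurable
      (ae_of_all _ fun x => by
        rw [Real.norm_eq_abs, abs_of_nonneg (hFn_nonneg x)]; exact hFn_le_one x)
  have hout : |∫ x, gF (Φ t x) ∂μseq n - ∫ x, gF x ∂μseq n| ≤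
      2 * (∫⁻ x, β x ∂μseq n).toReal + L * δ := by
    rw [key1, ← integral_sub hgΦint hFnint]
    calc |∫ x, (gF (Φ t x) - Fn x) ∂μseq n| ≤ ∫ x, |gF (Φ t x) - Fn x| ∂μseq n := by
          simpa [Real.norm_eq_abs] using norm_integral_le_integral_norm (μ := μseq n)
            (fun x => gF (Φ t x) - Fn x)
      _ ≤ ∫ x, (2 * (β x).toReal + L * δ) ∂μseq n := by
          refine integral_mono (hgΦint.sub hFnint).abs ((hβint.const_mul 2).add
            (integrable_const _)) hpt
      _ = 2 * ∫ x, (β x).toReal ∂μseq n + L * δ := by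
          rw [integral_add (hβint.const_mul 2) (integrable_const _), integral_const,
            integral_const_mul]
          simp
      _ = 2 * (∫⁻ x, β x ∂μseq n).toReal + L * δ := by
          rw [integral_toReal hβm.aemeasurable
            (ae_of_all _ fun x => lt_of_le_of_lt (hβ1 x) ENNReal.one_lt_top)]
  have hlintβ : (∫⁻ x, β x ∂μseq n) ≤ ENNReal.ofReal (ε / 4) := by
    have hKm : MeasurableSet K := hK.isClosed.measurableSet
    rw [← lintegral_add_compl β hKm]
    have h1 : ∫⁻ x in K, β x ∂μseq n ≤ ENNReal.ofReal (ε / 8) := by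
      calc ∫⁻ x in K, β x ∂μseq n
          ≤ ∫⁻ _ in K, (⨆ x ∈ K, P n t x {y : M | δ ≤ dist y (Φ t x)}) ∂μseq n :=
            setLIntegral_mono (by fun_prop) fun x hx => le_biSup _ hx
        _ = (⨆ x ∈ K, P n t x {y : M | δ ≤ dist y (Φ t x)}) * μseq n K := by
            rw [setLIntegral_const]
        _ ≤ ENNReal.ofReal (ε / 8) * 1 := by
            exact mul_le_mul' hsup.le prob_le_one
        _ = ENNReal.ofReal (ε / 8) := mul_one _
    have h2 : ∫⁻ x in Kᶜ, β x ∂μseq n ≤ ENNReal.ofReal (ε / 8) := by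
      calc ∫⁻ x in Kᶜ, β x ∂μseq n ≤ ∫⁻ _ in Kᶜ, 1 ∂μseq n :=
            setLIntegral_mono measurable_const fun x _ => hβ1 x
        _ = μseq n Kᶜ := by rw [setLIntegral_const, one_mul]
        _ ≤ ENNReal.ofReal (ε / 8) := hKtight n
    calc ∫⁻ x in K, β x ∂μseq n + ∫⁻ x in Kᶜ, β x ∂μseq n
        ≤ ENNReal.ofReal (ε / 8) + ENNReal.ofReal (ε / 8) := add_le_add h1 h2
      _ = ENNReal.ofReal (ε / 4) := by
          rw [← ENNReal.ofReal_add (by positivity) (by positivity)]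
          congr 1
          ring
  have htr : (∫⁻ x, β x ∂μseq n).toReal ≤ ε / 4 :=
    ENNReal.toReal_le_of_le_ofReal (by positivity) hlintβ
  have hLδ : L * δ = ε / 4 := by
    rw [hδdef]
    field_simp
  calc |∫ x, gF (Φ t x) ∂μseq n - ∫ x, gF x ∂μseq n|
      ≤ 2 * (∫⁻ x, β x ∂μseq n).toReal + L * δ := hout
    _ ≤ 2 * (ε / 4) + ε / 4 := by
        have h2 : (0:ℝ) ≤ 2 := by norm_num
        nlinarith
    _ ≤ ε := by linarith

/-- Main limiting theorem: on a Polish space, if `μₙ` are stationary measures for Markov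
kernel families `(Pⁿ_t)` satisfying the probability-convergence hypothesis towards the
semiflow `Φ` (whose time-`t` maps are continuous), and `μₙ → μ` weakly, then `μ` is
`Φ`-invariant and `μ` gives full measure to the Birkhoff center of `Φ`. -/
theorem limit_of_stationary_measures_invariant_and_supported_on_birkhoffCenter
    {M : Type*} [MetricSpace M] [CompleteSpace M] [TopologicalSpace.SeparableSpace M]
    [MeasurableSpace M] [BorelSpace M]
    (Φ : ℝ → M → M)
    (hcont_t : ∀ x : M, ContinuousOn (fun t : ℝ => Φ t x) (Set.Ici 0))
    (hcont_x : ∀ T : ℝ, 0 ≤ T → Continuous (Φ T))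
    (hid : ∀ x : M, Φ 0 x = x)
    (hsemi : ∀ t s : ℝ, 0 ≤ t → 0 ≤ s → ∀ x : M, Φ t (Φ s x) = Φ (t + s) x)
    (P : ℕ → ℝ → ProbabilityTheory.Kernel M M)
    (hP : ∀ n : ℕ, ∀ t : ℝ, ProbabilityTheory.IsMarkovKernel (P n t))
    (μseq : ℕ → Measure M)
    (hprob : ∀ n : ℕ, IsProbabilityMeasure (μseq n))
    (hstat : ∀ n : ℕ, ∀ t : ℝ, 0 ≤ t → ∀ A : Set M, MeasurableSet A →
      ∫⁻ x, P n t x A ∂(μseq n) = μseq n A)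
    (hpc : ∀ K : Set M, IsCompact K → ∀ T : ℝ, 0 < T → ∀ δ : ℝ, 0 < δ →
      Filter.Tendsto (fun n : ℕ => ⨆ x ∈ K, P n T x {y : M | δ ≤ dist y (Φ T x)})
        Filter.atTop (nhds 0))
    (μ : Measure M) [IsProbabilityMeasure μ]
    (hweak : ∀ g : BoundedContinuousFunction M ℝ,
      Filter.Tendsto (fun n : ℕ => ∫ x, g x ∂(μseq n)) Filter.atTop (nhds (∫ x, g x ∂μ))) :
    (∀ t : ℝ, 0 ≤ t → ∀ A : Set M, MeasurableSet A → μ (Φ t ⁻¹' A) = μ A) ∧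
      μ (birkhoffCenter Φ) = 1 := by
  have hinv : ∀ t : ℝ, 0 ≤ t → ∀ A : Set M, MeasurableSet A → μ (Φ t ⁻¹' A) = μ A := by
    intro t ht A hA
    rcases eq_or_lt_of_le ht with heq | htpos
    · have h0 : Φ t ⁻¹' A = A := by
        ext x; simp [← heq, hid x]
      rw [h0]
    · have hΦc : Continuous (Φ t) := hcont_x t ht
      have hclosed : ∀ F : Set M, IsClosed F → μ (Φ t ⁻¹' F) = μ F := by
        intro F hF
        rcases F.eq_empty_or_nonempty with rfl | hFne
        · simp
        set g : ℕ → M → ℝ := fun k x => max (1 - ((k : ℝ) + 1) * Metric.infDist x F) 0 with hg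
        have hgc : ∀ k, Continuous (g k) := fun k =>
          (continuous_const.sub (continuous_const.mul
            (Metric.continuous_infDist_pt F))).max continuous_const
        have hg0 : ∀ k x, 0 ≤ g k x := fun k x => le_max_right _ _
        have hg1 : ∀ k x, g k x ≤ 1 := fun k x =>
          max_le (by nlinarith [Metric.infDist_nonneg (s := F) (x := x),
            Nat.cast_nonneg (α := ℝ) k]) zero_le_one
        have hLip : ∀ k (x y : M), |g k x - g k y| ≤ ((k : ℝ) + 1) * dist x y := by
          intro k x y
          have hd : |Metric.infDist x F - Metric.infDist y F| ≤ dist x y := by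
            have := (Metric.lipschitz_infDist_pt F).dist_le_mul x y
            simpa [Real.dist_eq] using this
          calc |g k x - g k y|
              ≤ |(1 - ((k : ℝ) + 1) * Metric.infDist x F) -
                  (1 - ((k : ℝ) + 1) * Metric.infDist y F)| := abs_max_sub_max_le_abs _ _ _
            _ ≤ ((k : ℝ) + 1) * dist x y := by
                have heq : (1 - ((k : ℝ) + 1) * Metric.infDist x F) -
                    (1 - ((k : ℝ) + 1) * Metric.infDist y F) =
                    ((k : ℝ) + 1) * (Metric.infDist y F - Metric.infDist x F) := by ring
                rw [heq, abs_mul, abs_of_nonneg (by positivity : (0:ℝ) ≤ (k : ℝ) + 1),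
                  abs_sub_comm]
                exact mul_le_mul_of_nonneg_left hd (by positivity)
        have hinvk : ∀ k : ℕ, ∫ x, g k (Φ t x) ∂μ = ∫ x, g k x ∂μ := fun k =>
          aux_inv Φ hcont_x P hP μseq hprob hstat hpc μ hweak t htpos (g k) (hgc k)
            (hg0 k) (hg1 k) ((k : ℝ) + 1) (by positivity) (hLip k)
        -- pointwise convergence to the indicator
        have hptw : ∀ x : M, Filter.Tendsto (fun k => g k x) Filter.atTop
            (nhds (Set.indicator F (fun _ => (1 : ℝ)) x)) := by
          intro x
          rcases Classical.em (x ∈ F) with hx | hx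
          · have : ∀ k : ℕ, g k x = 1 := fun k => by
              simp [hg, Metric.infDist_zero_of_mem hx]
            rw [Set.indicator_of_mem hx]
            simp only [this]
            exact tendsto_const_nhds
          · have hdpos : 0 < Metric.infDist x F :=
              (IsClosed.notMem_iff_infDist_pos hF hFne).mp hx
            rw [Set.indicator_of_notMem hx]
            refine tendsto_atTop_of_eventually_const (i₀ := ⌈1 / Metric.infDist x F⌉₊)
              fun k hk => ?_
            have h1 : 1 / Metric.infDist x F ≤ (k : ℝ) + 1 := by
              calc 1 / Metric.infDist x F ≤ (⌈1 / Metric.infDist x F⌉₊ : ℝ) := Nat.le_ceil _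
                _ ≤ (k : ℝ) := Nat.cast_le.mpr hk
                _ ≤ (k : ℝ) + 1 := by linarith
            have h2 : 1 ≤ ((k : ℝ) + 1) * Metric.infDist x F := by
              rw [div_le_iff₀ hdpos] at h1
              linarith
            exact max_eq_right (by linarith)
        have htend1 : Filter.Tendsto (fun k => ∫ x, g k x ∂μ) Filter.atTop
            (nhds (∫ x, Set.indicator F (fun _ => (1 : ℝ)) x ∂μ)) := by
          refine tendsto_integral_of_dominated_convergence (fun _ => (1 : ℝ))
            (fun k => (hgc k).aestronglyMeasurable) (integrable_const 1)
            (fun k => Filter.Eventually.of_forall fun x => ?_)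
            (Filter.Eventually.of_forall fun x => hptw x)
          rw [Real.norm_eq_abs, abs_of_nonneg (hg0 k x)]; exact hg1 k x
        have htend2 : Filter.Tendsto (fun k => ∫ x, g k (Φ t x) ∂μ) Filter.atTop
            (nhds (∫ x, Set.indicator F (fun _ => (1 : ℝ)) (Φ t x) ∂μ)) := by
          refine tendsto_integral_of_dominated_convergence (fun _ => (1 : ℝ))
            (fun k => ((hgc k).comp hΦc).aestronglyMeasurable) (integrable_const 1)
            (fun k => Filter.Eventually.of_forall fun x => ?_)
            (Filter.Eventually.of_forall fun x => hptw (Φ t x))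
          rw [Real.norm_eq_abs, abs_of_nonneg (hg0 k _)]; exact hg1 k _
        have heqlim : ∫ x, Set.indicator F (fun _ => (1 : ℝ)) (Φ t x) ∂μ =
            ∫ x, Set.indicator F (fun _ => (1 : ℝ)) x ∂μ := by
          refine tendsto_nhds_unique ?_ htend1
          simpa only [hinvk] using htend2
        have hpre : (fun x => Set.indicator F (fun _ => (1 : ℝ)) (Φ t x)) =
            Set.indicator (Φ t ⁻¹' F) (fun _ => (1 : ℝ)) := by
          ext x
          by_cases hx : Φ t x ∈ F
          · rw [Set.indicator_of_mem hx, Set.indicator_of_mem (Set.mem_preimage.mpr hx)]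
          · rw [Set.indicator_of_notMem hx,
              Set.indicator_of_notMem (fun h => hx (Set.mem_preimage.mp h))]
        rw [hpre] at heqlim
        have hind1 : ∫ x, Set.indicator (Φ t ⁻¹' F) (fun _ => (1 : ℝ)) x ∂μ =
            (μ (Φ t ⁻¹' F)).toReal := by
          rw [MeasureTheory.integral_indicator_const _
            (hF.measurableSet.preimage hΦc.measurable)]
          simp
          rfl
        have hind2 : ∫ x, Set.indicator F (fun _ => (1 : ℝ)) x ∂μ = (μ F).toReal := by
          rw [MeasureTheory.integral_indicator_const _ hF.measurableSet]
          simp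
          rfl
        rw [hind1, hind2] at heqlim
        exact (ENNReal.toReal_eq_toReal_iff' (measure_ne_top μ _) (measure_ne_top μ _)).mp heqlim
      have hmap : Measure.map (Φ t) μ = μ := by
        haveI : IsProbabilityMeasure (Measure.map (Φ t) μ) :=
          Measure.isProbabilityMeasure_map hΦc.measurable.aemeasurable
        refine MeasureTheory.ext_of_generate_finite {s : Set M | IsClosed s} ?_
          isPiSystem_isClosed ?_ ?_
        · rw [BorelSpace.measurable_eq (α := M), borel_eq_generateFrom_isClosed]
        · intro F hF
          rw [Measure.map_apply hΦc.measurable hF.measurableSet]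
          exact hclosed F hF
        · simp [measure_univ]
      rw [← Measure.map_apply hΦc.measurable hA, hmap]
  refine ⟨hinv, ?_⟩
  -- Birkhoff center part
  haveI : SecondCountableTopology M := UniformSpace.secondCountable_of_separable M
  have hmeas1 : Measurable (Φ 1) := (hcont_x 1 zero_le_one).measurable
  have hmp : MeasurePreserving (Φ 1) μ μ := by
    refine ⟨hmeas1, ?_⟩
    ext A hA
    rw [Measure.map_apply hmeas1 hA]
    exact hinv 1 zero_le_one A hA
  have hcons : MeasureTheory.Conservative (Φ 1) μ := hmp.conservative
  have hae := hcons.ae_frequently_mem_of_mem_nhds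
  have hiter : ∀ (n : ℕ) (x : M), (Φ 1)^[n] x = Φ (n : ℝ) x := by
    intro n
    induction n with
    | zero => intro x; simp [hid x]
    | succ n ih =>
      intro x
      rw [Function.iterate_succ_apply', ih, hsemi 1 (n : ℝ) zero_le_one (Nat.cast_nonneg n)]
      congr 1
      push_cast
      ring
  have hrec : ∀ᵐ x ∂μ, x ∈ omegaLimitSet Φ x := by
    refine hae.mono fun x hx => ?_
    intro U hU k
    obtain ⟨s, hs, hmem⟩ := (Filter.frequently_atTop.mp (hx U hU)) k
    refine ⟨(s : ℝ), Nat.cast_le.mpr hs, ?_⟩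
    rw [← hiter s x]
    exact hmem
  have hsubm : ∀ᵐ x ∂μ, x ∈ birkhoffCenter Φ :=
    hrec.mono fun x hx => subset_closure hx
  have h0 : μ (birkhoffCenter Φ)ᶜ = 0 := by
    have := MeasureTheory.ae_iff.mp hsubm
    simpa [Set.compl_def] using this
  have h1 : (1 : ENNReal) ≤ μ (birkhoffCenter Φ) := by
    have hle : μ Set.univ ≤ μ (birkhoffCenter Φ) + μ (birkhoffCenter Φ)ᶜ := by
      rw [← Set.union_compl_self (birkhoffCenter Φ)]
      exact measure_union_le _ _
    rw [measure_univ, h0, add_zero] at hle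
    exact hle
  exact le_antisymm prob_le_one h1
end

section
/- Let M be a separable metric space, let Φ : [0,∞) × M → M be a semiflow, and let μ be a Φ-invariant Borel probability measure on M. Then μ(B(Φ)) = 1, where B(Φ) is the Birkhoff center of Φ; consequently the topological support of μ is contained in B(Φ). -/
open MeasureTheory Topology Filter Set

/-- Poincaré recurrence: a `Φ`-invariant Borel probability measure on a separable metric
space gives full measure to the Birkhoff center of the semiflow `Φ`; consequently the
topological support of `μ` is contained in the Birkhoff center. -/
theorem fullMeasure_birkhoffCenter_of_invariant
    {M : Type*} [MetricSpace M] [TopologicalSpace.SeparableSpace M]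
    [MeasurableSpace M] [BorelSpace M]
    (Φ : ℝ → M → M)
    (hcont_t : ∀ x : M, ContinuousOn (fun t : ℝ => Φ t x) (Set.Ici 0))
    (hmeas : ∀ t : ℝ, 0 ≤ t → Measurable (Φ t))
    (hid : ∀ x : M, Φ 0 x = x)
    (hsemi : ∀ t s : ℝ, 0 ≤ t → 0 ≤ s → ∀ x : M, Φ t (Φ s x) = Φ (t + s) x)
    (μ : Measure M) [IsProbabilityMeasure μ]
    (hinv : ∀ t : ℝ, 0 ≤ t → ∀ A : Set M, MeasurableSet A → μ (Φ t ⁻¹' A) = μ A) :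
    μ (birkhoffCenter Φ) = 1 ∧
      {x : M | ∀ U ∈ nhds x, 0 < μ U} ⊆ birkhoffCenter Φ := by
  haveI : SecondCountableTopology M := UniformSpace.secondCountable_of_separable M
  set T : M → M := Φ 1 with hT
  -- iterates of T agree with Φ at natural times
  have hiter : ∀ (n : ℕ) (x : M), T^[n] x = Φ (n : ℝ) x := by
    intro n
    induction n with
    | zero => intro x; simpa using (hid x).symm
    | succ n ih =>
      intro x
      rw [Function.iterate_succ_apply', ih x, hT, hsemi 1 n zero_le_one (Nat.cast_nonneg n)]
      norm_num
      ring_nf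
  have hmp : MeasurePreserving T μ μ :=
    ⟨hmeas 1 zero_le_one, by
      ext A hA
      rw [Measure.map_apply (hmeas 1 zero_le_one) hA]
      exact hinv 1 zero_le_one A hA⟩
  have hcons : Conservative T μ := hmp.conservative
  have hae : ∀ᵐ x ∂μ, ∀ s ∈ 𝓝 x, ∃ᶠ n in atTop, T^[n] x ∈ s :=
    hcons.ae_frequently_mem_of_mem_nhds
  -- recurrent points for T are in the recurrent set of the semiflow
  have hsub : {x : M | ∀ s ∈ 𝓝 x, ∃ᶠ n in atTop, T^[n] x ∈ s} ⊆
      {x : M | x ∈ omegaLimitSet Φ x} := by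
    intro x hx U hU k
    rcases ((hx U hU).and_eventually (eventually_ge_atTop k)).exists with ⟨n, hn, hnk⟩
    exact ⟨(n : ℝ), by exact_mod_cast Nat.cast_le.mpr hnk, hiter n x ▸ hn⟩
  have h0 : μ {x : M | x ∈ omegaLimitSet Φ x}ᶜ = 0 := by
    refine measure_mono_null ?_ (ae_iff.mp hae)
    intro x hx hP
    exact hx (hsub hP)
  have h1 : μ (birkhoffCenter Φ) = 1 := by
    have hBc : μ (birkhoffCenter Φ)ᶜ = 0 :=
      measure_mono_null (compl_subset_compl.mpr subset_closure) h0
    have hc : μ (birkhoffCenter Φ)ᶜ = μ (univ : Set M) - μ (birkhoffCenter Φ) :=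
      measure_compl isClosed_closure.measurableSet (measure_ne_top μ _)
    rw [hBc, measure_univ] at hc
    exact le_antisymm prob_le_one (tsub_eq_zero_iff_le.mp hc.symm)
  refine ⟨h1, ?_⟩
  intro x hx
  by_contra hxc
  have hopen : IsOpen (birkhoffCenter Φ)ᶜ := isClosed_closure.isOpen_compl
  have hmem : (birkhoffCenter Φ)ᶜ ∈ 𝓝 x := hopen.mem_nhds hxc
  have hpos := hx _ hmem
  have hzero : μ (birkhoffCenter Φ)ᶜ = 0 :=
    measure_mono_null (compl_subset_compl.mpr subset_closure) h0
  exact absurd hzero hpos.ne'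
end

section
/- Let M be a separable metric space, Φ : [0,∞) × M → M a semiflow, and μ a Φ-invariant Borel probability measure on M. Let H = supp(μ) and assume H is invariant in the sense that Φ(t,·)(H) ⊆ H for every t ≥ 0. Then H equals the closure of the set of its recurrent points: supp(μ) = closure of {x ∈ supp(μ) : x ∈ ω(x)}; in particular, the recurrent points of Φ lying in supp(μ) are dense in supp(μ). -/
open MeasureTheory Topology Filter Set

/-- If `μ` is a `Φ`-invariant Borel probability measure on a separable metric space whose
support `H = supp μ` is invariant (`Φ t '' H ⊆ H` for all `t ≥ 0`), then `H` coincides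
with the closure of its recurrent points: every point of the support is a limit of
recurrent points of the restricted semiflow. -/
theorem support_eq_closure_recurrent_points
    {M : Type*} [MetricSpace M] [TopologicalSpace.SeparableSpace M]
    [MeasurableSpace M] [BorelSpace M]
    (Φ : ℝ → M → M)
    (hcont_t : ∀ x : M, ContinuousOn (fun t : ℝ => Φ t x) (Set.Ici 0))
    (hmeas : ∀ t : ℝ, 0 ≤ t → Measurable (Φ t))
    (hid : ∀ x : M, Φ 0 x = x)
    (hsemi : ∀ t s : ℝ, 0 ≤ t → 0 ≤ s → ∀ x : M, Φ t (Φ s x) = Φ (t + s) x)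
    (μ : Measure M) [IsProbabilityMeasure μ]
    (hinv : ∀ t : ℝ, 0 ≤ t → ∀ A : Set M, MeasurableSet A → μ (Φ t ⁻¹' A) = μ A)
    (hHinv : ∀ t : ℝ, 0 ≤ t →
      Φ t '' {x : M | ∀ U ∈ nhds x, 0 < μ U} ⊆ {x : M | ∀ U ∈ nhds x, 0 < μ U}) :
    {x : M | ∀ U ∈ nhds x, 0 < μ U} =
      closure {x : M | (∀ U ∈ nhds x, 0 < μ U) ∧ x ∈ omegaLimitSet Φ x} := by
  classical
  haveI : SecondCountableTopology M := UniformSpace.secondCountable_of_separable M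
  set H : Set M := {x : M | ∀ U ∈ nhds x, 0 < μ U} with hH
  -- H is closed
  have hHclosed : IsClosed H := by
    rw [← isOpen_compl_iff]
    rw [isOpen_iff_mem_nhds]
    intro x hx
    simp only [hH, mem_compl_iff, mem_setOf_eq, not_forall] at hx
    obtain ⟨U, hU, hUpos⟩ := hx
    have hU0 : μ U = 0 := by
      by_contra h
      exact hUpos (pos_iff_ne_zero.mpr h)
    obtain ⟨V, hVU, hVopen, hxV⟩ := mem_nhds_iff.mp hU
    filter_upwards [hVopen.mem_nhds hxV] with y hy
    simp only [hH, mem_compl_iff, mem_setOf_eq, not_forall]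
    refine ⟨V, hVopen.mem_nhds hy, ?_⟩
    have : μ V = 0 := le_antisymm (hU0 ▸ measure_mono hVU) (zero_le)
    simp [this]
  -- complement of H is null
  have hHnull : μ Hᶜ = 0 := by
    obtain ⟨B, hBcount, -, hBbasis⟩ := TopologicalSpace.exists_countable_basis M
    have hsub : Hᶜ ⊆ ⋃₀ {U ∈ B | μ U = 0} := by
      intro x hx
      simp only [hH, mem_compl_iff, mem_setOf_eq, not_forall] at hx
      obtain ⟨U, hU, hUpos⟩ := hx
      have hU0 : μ U = 0 := by
        by_contra h
        exact hUpos (pos_iff_ne_zero.mpr h)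
      obtain ⟨V, hVB, hxV, hVU⟩ := hBbasis.mem_nhds_iff.mp hU
      exact ⟨V, ⟨hVB, le_antisymm (hU0 ▸ measure_mono hVU) (zero_le)⟩, hxV⟩
    refine measure_mono_null hsub ?_
    rw [measure_sUnion_null_iff (hBcount.mono (sep_subset _ _))]
    exact fun s hs => hs.2
  -- Φ 1 is measure preserving, hence conservative
  have hmp : MeasurePreserving (Φ 1) μ μ := by
    refine ⟨hmeas 1 zero_le_one, ?_⟩
    apply Measure.ext
    intro A hA
    rw [Measure.map_apply (hmeas 1 zero_le_one) hA]
    exact hinv 1 zero_le_one A hA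
  have hcons : Conservative (Φ 1) μ := hmp.conservative
  have hrec := hcons.ae_frequently_mem_of_mem_nhds
  -- iterates of Φ 1 are Φ n
  have hiter : ∀ (n : ℕ) (y : M), (Φ 1)^[n] y = Φ (n : ℝ) y := by
    intro n
    induction n with
    | zero => intro y; simp [hid]
    | succ n ih =>
      intro y
      rw [Function.iterate_succ_apply', ih, hsemi 1 n zero_le_one (Nat.cast_nonneg n)]
      push_cast
      ring_nf
  -- the good set
  set R : Set M := {x : M | (∀ U ∈ nhds x, 0 < μ U) ∧ x ∈ omegaLimitSet Φ x} with hR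
  have hae : ∀ᵐ y ∂μ, y ∈ R := by
    filter_upwards [hrec, measure_eq_zero_iff_ae_notMem.mp hHnull] with y hy hyH
    have hyH' : y ∈ H := by simpa using hyH
    refine ⟨hyH', ?_⟩
    intro U hU k
    have := hy U hU
    rw [frequently_atTop] at this
    obtain ⟨n, hnk, hn⟩ := this k
    refine ⟨(n : ℝ), by exact_mod_cast hnk, ?_⟩
    rw [← hiter n y]
    exact hn
  apply Set.Subset.antisymm
  · -- H ⊆ closure R
    intro x hx
    rw [mem_closure_iff_nhds]
    intro U hU
    have hUpos : 0 < μ U := hx U hU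
    have : 0 < μ (U ∩ R) := by
      have hRc : μ Rᶜ = 0 := by
        rw [measure_eq_zero_iff_ae_notMem]
        filter_upwards [hae] with y hy using not_not_intro hy
      have : μ U ≤ μ (U ∩ R) + μ Rᶜ := by
        calc μ U ≤ μ ((U ∩ R) ∪ Rᶜ) := measure_mono (fun y hy => by
              by_cases h : y ∈ R
              · exact Or.inl ⟨hy, h⟩
              · exact Or.inr h)
          _ ≤ μ (U ∩ R) + μ Rᶜ := measure_union_le _ _
      rw [hRc, add_zero] at this
      exact lt_of_lt_of_le hUpos this
    exact nonempty_of_measure_ne_zero this.ne'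
  · -- closure R ⊆ H
    have hRH : R ⊆ H := fun y hy => hy.1
    calc closure R ⊆ closure H := closure_mono hRH
      _ = H := hHclosed.closure_eq
end

section
/- For every real number κ > 1, setting γ = 9·((2√κ − 1)/(√κ − 1)² + 1), one has the inequality (x₁ + x₂ + x₃ + x₄)³ ≤ κ·x₁³ + γ·(x₂³ + x₃³ + x₄³) for all real numbers x₁, x₂, x₃, x₄ ≥ 0. -/
/-- For every `κ > 1`, with `γ = 9·((2√κ − 1)/(√κ − 1)² + 1)`, one has
`(x₁ + x₂ + x₃ + x₄)³ ≤ κ·x₁³ + γ·(x₂³ + x₃³ + x₄³)` for all nonnegative reals. -/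
theorem cube_sum_ineq (κ : ℝ) (hκ : 1 < κ) :
    ∀ x₁ x₂ x₃ x₄ : ℝ, 0 ≤ x₁ → 0 ≤ x₂ → 0 ≤ x₃ → 0 ≤ x₄ →
      (x₁ + x₂ + x₃ + x₄) ^ 3 ≤
        κ * x₁ ^ 3 +
          (9 * ((2 * Real.sqrt κ - 1) / (Real.sqrt κ - 1) ^ 2 + 1)) *
            (x₂ ^ 3 + x₃ ^ 3 + x₄ ^ 3) := by
  intro x₁ x₂ x₃ x₄ h1 h2 h3 h4
  set t := Real.sqrt κ with htdef
  have ht : 1 < t := by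
    rw [htdef, show (1:ℝ) = Real.sqrt 1 by simp]
    exact Real.sqrt_lt_sqrt (by norm_num) hκ
  have ht2 : t ^ 2 = κ := Real.sq_sqrt (by linarith)
  clear_value t
  set s := x₂ + x₃ + x₄ with hsdef
  clear_value s
  have hpos : (0:ℝ) < (t - 1) ^ 2 := by nlinarith
  have hs : 0 ≤ s := by rw [hsdef]; positivity
  -- power mean: s³ ≤ 9(x₂³+x₃³+x₄³)
  have hpm : s ^ 3 ≤ 9 * (x₂ ^ 3 + x₃ ^ 3 + x₄ ^ 3) := by
    rw [hsdef]
    nlinarith [mul_nonneg (mul_nonneg h2 h3) h4, sq_nonneg (x₂ - x₃), sq_nonneg (x₂ - x₄),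
      sq_nonneg (x₃ - x₄), mul_nonneg (sq_nonneg (x₂ - x₃)) (add_nonneg h2 h3),
      mul_nonneg (sq_nonneg (x₂ - x₄)) (add_nonneg h2 h4),
      mul_nonneg (sq_nonneg (x₃ - x₄)) (add_nonneg h3 h4)]
  -- Hölder-type: (x₁+s)³(t−1)² ≤ t²(t−1)²x₁³ + t²s³
  have hkey : (x₁ + s) ^ 3 * (t - 1) ^ 2 ≤ t ^ 2 * (t - 1) ^ 2 * x₁ ^ 3 + t ^ 2 * s ^ 3 := by
    nlinarith [mul_nonneg (sq_nonneg (s - (t - 1) * x₁))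
      (add_nonneg (mul_nonneg (by linarith : (0:ℝ) ≤ 2 * t - 1) hs)
        (mul_nonneg (by nlinarith : (0:ℝ) ≤ t ^ 2 - 1) h1))]
  have hγ : (2 * t - 1) / (t - 1) ^ 2 + 1 = t ^ 2 / (t - 1) ^ 2 := by
    field_simp [sub_ne_zero.mpr ht.ne']
    ring
  rw [hγ, ← ht2]
  have hRHS : (t ^ 2 * x₁ ^ 3 + 9 * (t ^ 2 / (t - 1) ^ 2) * (x₂ ^ 3 + x₃ ^ 3 + x₄ ^ 3))
      * (t - 1) ^ 2 = t ^ 2 * (t - 1) ^ 2 * x₁ ^ 3 + 9 * t ^ 2 * (x₂ ^ 3 + x₃ ^ 3 + x₄ ^ 3) := by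
    field_simp [sub_ne_zero.mpr ht.ne']
  have hfinal : (x₁ + x₂ + x₃ + x₄) ^ 3 * (t - 1) ^ 2 ≤
      (t ^ 2 * x₁ ^ 3 + 9 * (t ^ 2 / (t - 1) ^ 2) * (x₂ ^ 3 + x₃ ^ 3 + x₄ ^ 3)) * (t - 1) ^ 2 := by
    rw [hRHS, show x₁ + x₂ + x₃ + x₄ = x₁ + s by rw [hsdef]; ring]
    have ht2pos : (0:ℝ) ≤ t ^ 2 := by positivity
    nlinarith [hkey, hpm, mul_le_mul_of_nonneg_left hpm ht2pos]
  exact le_of_mul_le_mul_right hfinal hpos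
end

section
/- The planar vector field b : ℝ² → ℝ² of the Bernoulli-lemniscate system, given by b(x,y) = ( −f(I(x,y))·(4x(x²+y²) − 8x) − g(I(x,y))·(4y(x²+y²) + 8y), −f(I(x,y))·(4y(x²+y²) + 8y) − g(I(x,y))·(−4x(x²+y²) + 8x) ), is globally Lipschitz continuous on ℝ²: there exists a constant L ≥ 0 such that ‖b(p) − b(q)‖ ≤ L·‖p − q‖ for all p, q ∈ ℝ², where ‖·‖ is the Euclidean norm. -/
/-- `I(x,y) = (x²+y²)² − 4(x²−y²)`. -/
noncomputable def lemI (x y : ℝ) : ℝ := (x ^ 2 + y ^ 2) ^ 2 - 4 * (x ^ 2 - y ^ 2)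

/-- `f(s) = s(s²+4)/(4(1+s²)^{7/4})`. -/
noncomputable def lemf (s : ℝ) : ℝ := s * (s ^ 2 + 4) / (4 * (1 + s ^ 2) ^ ((7 : ℝ) / 4))

/-- `g(s) = (s²+4)/(4(1+s²)^{11/8})`. -/
noncomputable def lemg (s : ℝ) : ℝ := (s ^ 2 + 4) / (4 * (1 + s ^ 2) ^ ((11 : ℝ) / 8))

/-- First component of the Bernoulli-lemniscate vector field. -/
noncomputable def lemb₁ (x y : ℝ) : ℝ :=
  -lemf (lemI x y) * (4 * x * (x ^ 2 + y ^ 2) - 8 * x) -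
    lemg (lemI x y) * (4 * y * (x ^ 2 + y ^ 2) + 8 * y)

/-- Second component of the Bernoulli-lemniscate vector field. -/
noncomputable def lemb₂ (x y : ℝ) : ℝ :=
  -lemf (lemI x y) * (4 * y * (x ^ 2 + y ^ 2) + 8 * y) -
    lemg (lemI x y) * (-4 * x * (x ^ 2 + y ^ 2) + 8 * x)

/-- The Bernoulli-lemniscate vector field `b : ℝ² → ℝ²` (with the Euclidean norm). -/
noncomputable def lemb (p : EuclideanSpace ℝ (Fin 2)) : EuclideanSpace ℝ (Fin 2) :=
  (WithLp.equiv 2 (Fin 2 → ℝ)).symm ![lemb₁ (p 0) (p 1), lemb₂ (p 0) (p 1)]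

noncomputable def lemU (s : ℝ) : ℝ := (1 + s ^ 2) ^ ((1:ℝ)/8)

lemma lemU_pos (s : ℝ) : 0 < lemU s := Real.rpow_pos_of_pos (by positivity) _

lemma lemU_one_le (s : ℝ) : 1 ≤ lemU s :=
  Real.one_le_rpow (by nlinarith [sq_nonneg s]) (by norm_num)

lemma lemU_pow (s : ℝ) (n : ℕ) : lemU s ^ n = (1 + s ^ 2) ^ ((n:ℝ)/8) := by
  rw [lemU, ← Real.rpow_natCast ((1 + s ^ 2) ^ ((1:ℝ)/8)) n, ← Real.rpow_mul (by positivity)]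
  ring_nf

lemma lemU_pow8 (s : ℝ) : lemU s ^ 8 = 1 + s ^ 2 := by
  rw [lemU_pow, show ((8:ℕ):ℝ)/8 = 1 by norm_num, Real.rpow_one]

lemma abs_le_U4 (s : ℝ) : |s| ≤ lemU s ^ 4 := by
  have h := lemU_pow8 s
  have h4 : (lemU s ^ 4) ^ 2 = 1 + s ^ 2 := by rw [← h]; ring
  have : s ^ 2 ≤ (lemU s ^ 4) ^ 2 := by nlinarith
  have hp : (0:ℝ) ≤ lemU s ^ 4 := by positivity
  nlinarith [abs_nonneg s, sq_abs s]

noncomputable def lemf' (s : ℝ) : ℝ :=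
  ((3*s^2+4)*(1+s^2) - (7/2)*s^2*(s^2+4)) / (4 * lemU s ^ 22)
noncomputable def lemg' (s : ℝ) : ℝ :=
  (2*s*(1+s^2) - (11/4)*s*(s^2+4)) / (4 * lemU s ^ 19)

lemma hasDerivAt_lemf (s : ℝ) : HasDerivAt lemf (lemf' s) s := by
  have hpos : (0:ℝ) < 1 + s ^ 2 := by positivity
  have h1 : HasDerivAt (fun t : ℝ => 1 + t ^ 2) (2 * s) s := by
    simpa using (hasDerivAt_pow 2 s).const_add 1
  have hd : HasDerivAt (fun t : ℝ => 4 * (1 + t ^ 2) ^ ((7:ℝ)/4))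
      (4 * (2 * s * ((7:ℝ)/4) * (1 + s ^ 2) ^ ((7:ℝ)/4 - 1))) s :=
    (h1.rpow_const (Or.inl hpos.ne')).const_mul 4
  have hn : HasDerivAt (fun t : ℝ => t * (t ^ 2 + 4)) (3 * s ^ 2 + 4) s := by
    have := (hasDerivAt_id s).mul ((hasDerivAt_pow 2 s).add_const 4)
    convert this using 1
    any_goals rfl
    simp; ring
  have hdne : 4 * (1 + s ^ 2) ^ ((7:ℝ)/4) ≠ 0 := by positivity
  have := hn.div hd hdne
  convert this using 1
  any_goals rfl
  have e1 : (1 + s ^ 2) ^ ((7:ℝ)/4) = lemU s ^ 14 := by rw [lemU_pow]; norm_num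
  have e2 : (1 + s ^ 2) ^ ((7:ℝ)/4 - 1) = lemU s ^ 6 := by rw [lemU_pow]; norm_num
  rw [lemf', e1, e2]
  have hU := lemU_pos s
  have h8 := lemU_pow8 s
  field_simp
  linear_combination (-(24:ℝ)*s^2-32) * h8

lemma hasDerivAt_lemg (s : ℝ) : HasDerivAt lemg (lemg' s) s := by
  have hpos : (0:ℝ) < 1 + s ^ 2 := by positivity
  have h1 : HasDerivAt (fun t : ℝ => 1 + t ^ 2) (2 * s) s := by
    simpa using (hasDerivAt_pow 2 s).const_add 1
  have hd : HasDerivAt (fun t : ℝ => 4 * (1 + t ^ 2) ^ ((11:ℝ)/8))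
      (4 * (2 * s * ((11:ℝ)/8) * (1 + s ^ 2) ^ ((11:ℝ)/8 - 1))) s :=
    (h1.rpow_const (Or.inl hpos.ne')).const_mul 4
  have hn : HasDerivAt (fun t : ℝ => t ^ 2 + 4) (2 * s) s := by
    simpa using (hasDerivAt_pow 2 s).add_const 4
  have hdne : 4 * (1 + s ^ 2) ^ ((11:ℝ)/8) ≠ 0 := by positivity
  have := hn.div hd hdne
  convert this using 1
  any_goals rfl
  have e1 : (1 + s ^ 2) ^ ((11:ℝ)/8) = lemU s ^ 11 := by rw [lemU_pow]; norm_num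
  have e2 : (1 + s ^ 2) ^ ((11:ℝ)/8 - 1) = lemU s ^ 3 := by rw [lemU_pow]; norm_num
  rw [lemg', e1, e2]
  have hU := lemU_pos s
  have h8 := lemU_pow8 s
  field_simp
  linear_combination (-(64:ℝ)*s) * h8

lemma bound_lemf (s : ℝ) : |lemf s| * lemU s ^ 2 ≤ 2 := by
  have hU := lemU_pos s
  have h8 := lemU_pow8 s
  have h1 : (1:ℝ) ≤ lemU s := lemU_one_le s
  have e1 : (1 + s ^ 2) ^ ((7:ℝ)/4) = lemU s ^ 14 := by rw [lemU_pow]; norm_num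
  have ha := abs_le_U4 s
  have h18 : (1:ℝ) ≤ lemU s ^ 8 := one_le_pow₀ h1
  have h614 : lemU s ^ 6 ≤ lemU s ^ 14 := pow_le_pow_right₀ h1 (by norm_num)
  rw [lemf, e1, abs_div, abs_mul,
    abs_of_nonneg (by positivity : (0:ℝ) ≤ s ^ 2 + 4),
    abs_of_pos (by positivity : (0:ℝ) < 4 * lemU s ^ 14),
    div_mul_eq_mul_div, div_le_iff₀ (by positivity)]
  nlinarith [mul_le_mul_of_nonneg_right ha
      (by positivity : (0:ℝ) ≤ (s ^ 2 + 4) * lemU s ^ 2),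
    pow_pos hU 14, pow_pos hU 2, sq_nonneg s]

lemma bound_lemg (s : ℝ) : |lemg s| * lemU s ^ 2 ≤ 2 := by
  have hU := lemU_pos s
  have h8 := lemU_pow8 s
  have h1 : (1:ℝ) ≤ lemU s := lemU_one_le s
  have e1 : (1 + s ^ 2) ^ ((11:ℝ)/8) = lemU s ^ 11 := by rw [lemU_pow]; norm_num
  have h18 : (1:ℝ) ≤ lemU s ^ 8 := one_le_pow₀ h1
  have h1011 : lemU s ^ 10 ≤ lemU s ^ 11 := pow_le_pow_right₀ h1 (by norm_num)
  rw [lemg, e1, abs_div,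
    abs_of_nonneg (by positivity : (0:ℝ) ≤ s ^ 2 + 4),
    abs_of_pos (by positivity : (0:ℝ) < 4 * lemU s ^ 11),
    div_mul_eq_mul_div, div_le_iff₀ (by positivity)]
  nlinarith [pow_pos hU 11, pow_pos hU 2, sq_nonneg s]

lemma bound_lemf' (s : ℝ) : |lemf' s| * lemU s ^ 6 ≤ 3 := by
  have hU := lemU_pos s
  have h8 := lemU_pow8 s
  have h1 : (1:ℝ) ≤ lemU s := lemU_one_le s
  have h18 : (1:ℝ) ≤ lemU s ^ 8 := one_le_pow₀ h1
  have hs2 : s ^ 2 ≤ lemU s ^ 8 := by nlinarith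
  have hs4 : s ^ 4 ≤ lemU s ^ 16 := by nlinarith [sq_nonneg s, pow_nonneg hU.le 8]
  have h816 : lemU s ^ 8 ≤ lemU s ^ 16 := pow_le_pow_right₀ h1 (by norm_num)
  have hN : |(3*s^2+4)*(1+s^2) - (7/2)*s^2*(s^2+4)| ≤ 12 * lemU s ^ 16 := by
    rw [abs_le]; constructor <;> nlinarith
  rw [lemf', abs_div, abs_of_pos (by positivity : (0:ℝ) < 4 * lemU s ^ 22),
    div_mul_eq_mul_div, div_le_iff₀ (by positivity)]
  nlinarith [mul_le_mul_of_nonneg_right hN (by positivity : (0:ℝ) ≤ lemU s ^ 6),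
    pow_pos hU 22]

lemma bound_lemg' (s : ℝ) : |lemg' s| * lemU s ^ 6 ≤ 3 := by
  have hU := lemU_pos s
  have h8 := lemU_pow8 s
  have h1 : (1:ℝ) ≤ lemU s := lemU_one_le s
  have h18 : (1:ℝ) ≤ lemU s ^ 8 := one_le_pow₀ h1
  have ha := abs_le_U4 s
  have hs2 : s ^ 2 ≤ lemU s ^ 8 := by nlinarith
  have ha3 : |s| ^ 3 ≤ lemU s ^ 12 := by
    calc |s| ^ 3 ≤ (lemU s ^ 4) ^ 3 := pow_le_pow_left₀ (abs_nonneg s) ha 3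
    _ = lemU s ^ 12 := by ring
  have h412 : lemU s ^ 4 ≤ lemU s ^ 12 := pow_le_pow_right₀ h1 (by norm_num)
  have hN : |2*s*(1+s^2) - (11/4)*s*(s^2+4)| ≤ 10 * lemU s ^ 12 := by
    have habs : |2*s*(1+s^2) - (11/4)*s*(s^2+4)| = |(-9 : ℝ)*s - (3/4)*s^3| := by
      congr 1; ring
    rw [habs]
    calc |(-9 : ℝ)*s - (3/4)*s^3| ≤ |(-9 : ℝ)*s| + |(3/4)*s^3| := abs_sub _ _
    _ = 9 * |s| + (3/4) * |s| ^ 3 := by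
        rw [abs_mul, abs_mul, abs_pow]; norm_num
    _ ≤ 9 * lemU s ^ 4 + (3/4) * lemU s ^ 12 := by nlinarith [abs_nonneg s]
    _ ≤ 10 * lemU s ^ 12 := by nlinarith [pow_pos hU 12]
  have h1819 : lemU s ^ 18 ≤ lemU s ^ 19 := pow_le_pow_right₀ h1 (by norm_num)
  rw [lemg', abs_div, abs_of_pos (by positivity : (0:ℝ) < 4 * lemU s ^ 19),
    div_mul_eq_mul_div, div_le_iff₀ (by positivity)]
  nlinarith [mul_le_mul_of_nonneg_right hN (by positivity : (0:ℝ) ≤ lemU s ^ 6),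
    pow_pos hU 19]

noncomputable def lemP (x y : ℝ) : ℝ := 4 * x * (x ^ 2 + y ^ 2) - 8 * x
noncomputable def lemQ (x y : ℝ) : ℝ := 4 * y * (x ^ 2 + y ^ 2) + 8 * y

/-- Key growth estimate: `r² ≤ 8 U(I)²`. -/
lemma key_r2 (x y : ℝ) : x ^ 2 + y ^ 2 ≤ 8 * lemU (lemI x y) ^ 2 := by
  set s := lemI x y with hs
  have hU := lemU_pos s
  have h1 := lemU_one_le s
  have h8 := lemU_pow8 s
  have h18 : (1:ℝ) ≤ lemU s ^ 8 := one_le_pow₀ h1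
  have h4 : (x ^ 2 + y ^ 2) ^ 4 ≤ 4096 * lemU s ^ 8 := by
    rcases le_or_gt (x ^ 2 + y ^ 2) 8 with h | h
    · calc (x ^ 2 + y ^ 2) ^ 4 ≤ 8 ^ 4 := pow_le_pow_left₀ (by positivity) h 4
      _ ≤ 4096 * lemU s ^ 8 := by nlinarith
    · have hIge : (x ^ 2 + y ^ 2) ^ 2 ≤ 2 * s := by
        rw [hs, lemI]; nlinarith [sq_nonneg y, sq_nonneg x]
      nlinarith [sq_nonneg (x^2+y^2), sq_nonneg s]
  have h28 : (x ^ 2 + y ^ 2) ^ 4 ≤ (8 * lemU s ^ 2) ^ 4 := h4.trans_eq (by ring)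
  exact le_of_pow_le_pow_left₀ (by norm_num) (by positivity) h28

/-- `P² + Q² = 16 r² (I + 4) ≤ 640 U(I)⁶`. -/
lemma key_PQ (x y : ℝ) : lemP x y ^ 2 + lemQ x y ^ 2 ≤ 640 * lemU (lemI x y) ^ 6 := by
  set s := lemI x y with hs
  have hU := lemU_pos s
  have h1 := lemU_one_le s
  have hr := key_r2 x y
  have ha := abs_le_U4 s
  have hid : lemP x y ^ 2 + lemQ x y ^ 2 = 16 * (x ^ 2 + y ^ 2) * (s + 4) := by
    rw [lemP, lemQ, hs, lemI]; ring
  rw [hid]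
  have hs4 : s + 4 ≤ 5 * lemU s ^ 4 := by
    have h14 : (1:ℝ) ≤ lemU s ^ 4 := one_le_pow₀ h1
    have := neg_abs_le s
    nlinarith [le_abs_self s]
  have hr0 : (0:ℝ) ≤ x ^ 2 + y ^ 2 := by positivity
  have hs40 : (0:ℝ) ≤ s + 4 := by rw [hs, lemI]; nlinarith [sq_nonneg (x^2-2), sq_nonneg (x*y), sq_nonneg (y^2), sq_nonneg y]
  calc 16 * (x ^ 2 + y ^ 2) * (s + 4) ≤ 16 * (8 * lemU s ^ 2) * (5 * lemU s ^ 4) := by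
        nlinarith [mul_le_mul hr hs4 hs40 (by positivity : (0:ℝ) ≤ 8 * lemU s ^ 2)]
  _ = 640 * lemU s ^ 6 := by ring

/-- bound for a product `h * a * b` where `|h| * U^6 ≤ 3` and `a² , b² ≤ 640 U⁶`. -/
lemma prod_bound {h a b U : ℝ} (hU : 0 < U) (hh : |h| * U ^ 6 ≤ 3)
    (ha : a ^ 2 ≤ 640 * U ^ 6) (hb : b ^ 2 ≤ 640 * U ^ 6) :
    |h * a * b| ≤ 1920 := by
  have hab : |a| * |b| ≤ 640 * U ^ 6 := by
    nlinarith [sq_nonneg (|a| - |b|), sq_abs a, sq_abs b, abs_nonneg a, abs_nonneg b]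
  have h6 : (0:ℝ) < U ^ 6 := by positivity
  rw [abs_mul, abs_mul]
  nlinarith [abs_nonneg h, abs_nonneg a, abs_nonneg b,
    mul_le_mul_of_nonneg_left hab (abs_nonneg h)]

/-- bound for a product `h * e` where `|h| * U^2 ≤ 2` and `|e| ≤ 104 U²`. -/
lemma prod_bound2 {h e U : ℝ} (hU : 0 < U) (hh : |h| * U ^ 2 ≤ 2)
    (he : |e| ≤ 104 * U ^ 2) : |h * e| ≤ 208 := by
  have h2 : (0:ℝ) < U ^ 2 := by positivity
  rw [abs_mul]
  nlinarith [abs_nonneg h, abs_nonneg e, mul_le_mul_of_nonneg_left he (abs_nonneg h)]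

noncomputable def lemD1x (x y : ℝ) : ℝ :=
  -(lemf' (lemI x y) * lemP x y * lemP x y) - lemf (lemI x y) * (12*x^2+4*y^2-8)
  - lemg' (lemI x y) * lemP x y * lemQ x y - lemg (lemI x y) * (8*x*y)
noncomputable def lemD1y (x y : ℝ) : ℝ :=
  -(lemf' (lemI x y) * lemQ x y * lemP x y) - lemf (lemI x y) * (8*x*y)
  - lemg' (lemI x y) * lemQ x y * lemQ x y - lemg (lemI x y) * (4*x^2+12*y^2+8)
noncomputable def lemD2x (x y : ℝ) : ℝ :=
  -(lemf' (lemI x y) * lemP x y * lemQ x y) - lemf (lemI x y) * (8*x*y)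
  - lemg' (lemI x y) * lemP x y * (-lemP x y) - lemg (lemI x y) * (-(12*x^2+4*y^2)+8)
noncomputable def lemD2y (x y : ℝ) : ℝ :=
  -(lemf' (lemI x y) * lemQ x y * lemQ x y) - lemf (lemI x y) * (4*x^2+12*y^2+8)
  - lemg' (lemI x y) * lemQ x y * (-lemP x y) - lemg (lemI x y) * (-(8*x*y))

section derivs
variable (x y : ℝ)

lemma hasDerivAt_I_x : HasDerivAt (fun x => lemI x y) (lemP x y) x := by
  have hsq : HasDerivAt (fun t : ℝ => t ^ 2 + y ^ 2) (2 * x) x := by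
    simpa using (hasDerivAt_pow 2 x).add_const (y ^ 2)
  have h := (hsq.pow 2).sub (((hasDerivAt_pow 2 x).sub_const (y ^ 2)).const_mul 4)
  convert h using 1
  any_goals rfl
  rw [lemP]; push_cast; ring

lemma hasDerivAt_I_y : HasDerivAt (fun y => lemI x y) (lemQ x y) y := by
  have hsq : HasDerivAt (fun t : ℝ => x ^ 2 + t ^ 2) (2 * y) y := by
    simpa using (hasDerivAt_pow 2 y).const_add (x ^ 2)
  have h2 : HasDerivAt (fun t : ℝ => x ^ 2 - t ^ 2) (-(2 * y)) y := by
    simpa [sub_eq_add_neg] using ((hasDerivAt_pow 2 y).neg).const_add (x ^ 2)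
  have h := (hsq.pow 2).sub (h2.const_mul 4)
  convert h using 1
  any_goals rfl
  rw [lemQ]; push_cast; ring

lemma hasDerivAt_P_x : HasDerivAt (fun x => 4 * x * (x ^ 2 + y ^ 2) - 8 * x)
    (12*x^2+4*y^2-8) x := by
  have hsq : HasDerivAt (fun t : ℝ => t ^ 2 + y ^ 2) (2 * x) x := by
    simpa using (hasDerivAt_pow 2 x).add_const (y ^ 2)
  have h := (((hasDerivAt_id x).const_mul 4).mul hsq).sub ((hasDerivAt_id x).const_mul 8)
  convert h using 1
  any_goals rfl
  simp only [id_eq]; ring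

lemma hasDerivAt_P_y : HasDerivAt (fun y => 4 * x * (x ^ 2 + y ^ 2) - 8 * x) (8*x*y) y := by
  have hsq : HasDerivAt (fun t : ℝ => x ^ 2 + t ^ 2) (2 * y) y := by
    simpa using (hasDerivAt_pow 2 y).const_add (x ^ 2)
  have h := (hsq.const_mul (4 * x)).sub_const (8 * x)
  convert h using 1
  any_goals rfl
  ring

lemma hasDerivAt_Q_x : HasDerivAt (fun x => 4 * y * (x ^ 2 + y ^ 2) + 8 * y) (8*x*y) x := by
  have hsq : HasDerivAt (fun t : ℝ => t ^ 2 + y ^ 2) (2 * x) x := by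
    simpa using (hasDerivAt_pow 2 x).add_const (y ^ 2)
  have h := (hsq.const_mul (4 * y)).add_const (8 * y)
  convert h using 1
  any_goals rfl
  ring

lemma hasDerivAt_Q_y : HasDerivAt (fun y => 4 * y * (x ^ 2 + y ^ 2) + 8 * y)
    (4*x^2+12*y^2+8) y := by
  have hsq : HasDerivAt (fun t : ℝ => x ^ 2 + t ^ 2) (2 * y) y := by
    simpa using (hasDerivAt_pow 2 y).const_add (x ^ 2)
  have h := (((hasDerivAt_id y).const_mul 4).mul hsq).add ((hasDerivAt_id y).const_mul 8)
  convert h using 1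
  any_goals rfl
  simp only [id_eq]; ring

lemma hasDerivAt_R_x : HasDerivAt (fun x => -4 * x * (x ^ 2 + y ^ 2) + 8 * x)
    (-(12*x^2+4*y^2)+8) x := by
  have hsq : HasDerivAt (fun t : ℝ => t ^ 2 + y ^ 2) (2 * x) x := by
    simpa using (hasDerivAt_pow 2 x).add_const (y ^ 2)
  have h := (((hasDerivAt_id x).const_mul (-4)).mul hsq).add ((hasDerivAt_id x).const_mul 8)
  convert h using 1
  any_goals rfl
  simp only [id_eq]; ring

lemma hasDerivAt_R_y : HasDerivAt (fun y => -4 * x * (x ^ 2 + y ^ 2) + 8 * x) (-(8*x*y)) y := by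
  have hsq : HasDerivAt (fun t : ℝ => x ^ 2 + t ^ 2) (2 * y) y := by
    simpa using (hasDerivAt_pow 2 y).const_add (x ^ 2)
  have h := (hsq.const_mul (-4 * x)).add_const (8 * x)
  convert h using 1
  any_goals rfl
  ring

lemma hasDerivAt_fI_x : HasDerivAt (fun x => lemf (lemI x y))
    (lemf' (lemI x y) * lemP x y) x :=
  by exact (hasDerivAt_lemf (lemI x y)).comp x (hasDerivAt_I_x x y)

lemma hasDerivAt_gI_x : HasDerivAt (fun x => lemg (lemI x y))
    (lemg' (lemI x y) * lemP x y) x :=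
  by exact (hasDerivAt_lemg (lemI x y)).comp x (hasDerivAt_I_x x y)

lemma hasDerivAt_fI_y : HasDerivAt (fun y => lemf (lemI x y))
    (lemf' (lemI x y) * lemQ x y) y :=
  (hasDerivAt_lemf (lemI x y)).comp y (hasDerivAt_I_y x y)

lemma hasDerivAt_gI_y : HasDerivAt (fun y => lemg (lemI x y))
    (lemg' (lemI x y) * lemQ x y) y :=
  (hasDerivAt_lemg (lemI x y)).comp y (hasDerivAt_I_y x y)

lemma hasDerivAt_b1_x : HasDerivAt (fun x => lemb₁ x y) (lemD1x x y) x := by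
  have h := (((hasDerivAt_fI_x x y).neg.mul (hasDerivAt_P_x x y)).sub
    ((hasDerivAt_gI_x x y).mul (hasDerivAt_Q_x x y)))
  convert h using 1
  any_goals rfl
  rw [lemD1x, lemP, lemQ]; simp only [Pi.neg_apply]; ring

lemma hasDerivAt_b1_y : HasDerivAt (fun y => lemb₁ x y) (lemD1y x y) y := by
  have h := (((hasDerivAt_fI_y x y).neg.mul (hasDerivAt_P_y x y)).sub
    ((hasDerivAt_gI_y x y).mul (hasDerivAt_Q_y x y)))
  convert h using 1
  any_goals rfl
  rw [lemD1y, lemP, lemQ]; simp only [Pi.neg_apply]; ring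

lemma hasDerivAt_b2_x : HasDerivAt (fun x => lemb₂ x y) (lemD2x x y) x := by
  have h := (((hasDerivAt_fI_x x y).neg.mul (hasDerivAt_Q_x x y)).sub
    ((hasDerivAt_gI_x x y).mul (hasDerivAt_R_x x y)))
  convert h using 1
  any_goals rfl
  rw [lemD2x, lemP, lemQ]; simp only [Pi.neg_apply]; ring

lemma hasDerivAt_b2_y : HasDerivAt (fun y => lemb₂ x y) (lemD2y x y) y := by
  have h := (((hasDerivAt_fI_y x y).neg.mul (hasDerivAt_Q_y x y)).sub
    ((hasDerivAt_gI_y x y).mul (hasDerivAt_R_y x y)))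
  convert h using 1
  any_goals rfl
  rw [lemD2y, lemP, lemQ]; simp only [Pi.neg_apply]; ring

end derivs

section Dbounds
variable (x y : ℝ)

lemma lem_setup :
    lemP x y ^ 2 ≤ 640 * lemU (lemI x y) ^ 6 ∧
    lemQ x y ^ 2 ≤ 640 * lemU (lemI x y) ^ 6 ∧
    (-lemP x y) ^ 2 ≤ 640 * lemU (lemI x y) ^ 6 := by
  have h := key_PQ x y
  refine ⟨by nlinarith [sq_nonneg (lemQ x y)], by nlinarith [sq_nonneg (lemP x y)],
    by nlinarith [sq_nonneg (lemQ x y)]⟩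

lemma he_a : |12*x^2+4*y^2-8| ≤ 104 * lemU (lemI x y) ^ 2 := by
  have hr := key_r2 x y
  have h12 : (1:ℝ) ≤ lemU (lemI x y) ^ 2 := one_le_pow₀ (lemU_one_le _)
  rw [abs_le]; constructor <;> nlinarith [sq_nonneg x, sq_nonneg y]

lemma he_b : |8*x*y| ≤ 104 * lemU (lemI x y) ^ 2 := by
  have hr := key_r2 x y
  have h12 : (1:ℝ) ≤ lemU (lemI x y) ^ 2 := one_le_pow₀ (lemU_one_le _)
  rw [abs_le]; constructor <;> nlinarith [sq_nonneg (x-y), sq_nonneg (x+y)]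

lemma he_c : |4*x^2+12*y^2+8| ≤ 104 * lemU (lemI x y) ^ 2 := by
  have hr := key_r2 x y
  have h12 : (1:ℝ) ≤ lemU (lemI x y) ^ 2 := one_le_pow₀ (lemU_one_le _)
  rw [abs_le]; constructor <;> nlinarith [sq_nonneg x, sq_nonneg y]

lemma he_d : |-(12*x^2+4*y^2)+8| ≤ 104 * lemU (lemI x y) ^ 2 := by
  have hr := key_r2 x y
  have h12 : (1:ℝ) ≤ lemU (lemI x y) ^ 2 := one_le_pow₀ (lemU_one_le _)
  rw [abs_le]; constructor <;> nlinarith [sq_nonneg x, sq_nonneg y]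

lemma he_e : |-(8*x*y)| ≤ 104 * lemU (lemI x y) ^ 2 := by
  have hr := key_r2 x y
  have h12 : (1:ℝ) ≤ lemU (lemI x y) ^ 2 := one_le_pow₀ (lemU_one_le _)
  rw [abs_le]; constructor <;> nlinarith [sq_nonneg (x-y), sq_nonneg (x+y)]

lemma bound_D1x : |lemD1x x y| ≤ 4256 := by
  obtain ⟨hP2, hQ2, hN2⟩ := lem_setup x y
  have hU := lemU_pos (lemI x y)
  have t1 := abs_le.mp (prod_bound hU (bound_lemf' (lemI x y)) hP2 hP2)
  have t2 := abs_le.mp (prod_bound2 hU (bound_lemf (lemI x y)) (he_a x y))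
  have t3 := abs_le.mp (prod_bound hU (bound_lemg' (lemI x y)) hP2 hQ2)
  have t4 := abs_le.mp (prod_bound2 hU (bound_lemg (lemI x y)) (he_b x y))
  rw [lemD1x, abs_le]; constructor <;> linarith [t1.1, t1.2, t2.1, t2.2, t3.1, t3.2, t4.1, t4.2]

lemma bound_D1y : |lemD1y x y| ≤ 4256 := by
  obtain ⟨hP2, hQ2, hN2⟩ := lem_setup x y
  have hU := lemU_pos (lemI x y)
  have t1 := abs_le.mp (prod_bound hU (bound_lemf' (lemI x y)) hQ2 hP2)
  have t2 := abs_le.mp (prod_bound2 hU (bound_lemf (lemI x y)) (he_b x y))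
  have t3 := abs_le.mp (prod_bound hU (bound_lemg' (lemI x y)) hQ2 hQ2)
  have t4 := abs_le.mp (prod_bound2 hU (bound_lemg (lemI x y)) (he_c x y))
  rw [lemD1y, abs_le]; constructor <;> linarith [t1.1, t1.2, t2.1, t2.2, t3.1, t3.2, t4.1, t4.2]

lemma bound_D2x : |lemD2x x y| ≤ 4256 := by
  obtain ⟨hP2, hQ2, hN2⟩ := lem_setup x y
  have hU := lemU_pos (lemI x y)
  have t1 := abs_le.mp (prod_bound hU (bound_lemf' (lemI x y)) hP2 hQ2)
  have t2 := abs_le.mp (prod_bound2 hU (bound_lemf (lemI x y)) (he_b x y))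
  have t3 := abs_le.mp (prod_bound hU (bound_lemg' (lemI x y)) hP2 hN2)
  have t4 := abs_le.mp (prod_bound2 hU (bound_lemg (lemI x y)) (he_d x y))
  rw [lemD2x, abs_le]; constructor <;> linarith [t1.1, t1.2, t2.1, t2.2, t3.1, t3.2, t4.1, t4.2]

lemma bound_D2y : |lemD2y x y| ≤ 4256 := by
  obtain ⟨hP2, hQ2, hN2⟩ := lem_setup x y
  have hU := lemU_pos (lemI x y)
  have t1 := abs_le.mp (prod_bound hU (bound_lemf' (lemI x y)) hQ2 hQ2)
  have t2 := abs_le.mp (prod_bound2 hU (bound_lemf (lemI x y)) (he_c x y))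
  have t3 := abs_le.mp (prod_bound hU (bound_lemg' (lemI x y)) hQ2 hN2)
  have t4 := abs_le.mp (prod_bound2 hU (bound_lemg (lemI x y)) (he_e x y))
  rw [lemD2y, abs_le]; constructor <;> linarith [t1.1, t1.2, t2.1, t2.2, t3.1, t3.2, t4.1, t4.2]

end Dbounds

lemma lip_b1_x (y a b : ℝ) : |lemb₁ a y - lemb₁ b y| ≤ 4256 * |a - b| := by
  have h := Convex.norm_image_sub_le_of_norm_hasDerivWithin_le
    (f := fun x => lemb₁ x y) (f' := fun x => lemD1x x y) (s := Set.univ) (C := 4256)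
    (fun x _ => (hasDerivAt_b1_x x y).hasDerivWithinAt)
    (fun x _ => by rw [Real.norm_eq_abs]; exact bound_D1x x y)
    convex_univ (Set.mem_univ b) (Set.mem_univ a)
  simpa [Real.norm_eq_abs] using h

lemma lip_b1_y (x a b : ℝ) : |lemb₁ x a - lemb₁ x b| ≤ 4256 * |a - b| := by
  have h := Convex.norm_image_sub_le_of_norm_hasDerivWithin_le
    (f := fun y => lemb₁ x y) (f' := fun y => lemD1y x y) (s := Set.univ) (C := 4256)
    (fun y _ => (hasDerivAt_b1_y x y).hasDerivWithinAt)
    (fun y _ => by rw [Real.norm_eq_abs]; exact bound_D1y x y)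
    convex_univ (Set.mem_univ b) (Set.mem_univ a)
  simpa [Real.norm_eq_abs] using h

lemma lip_b2_x (y a b : ℝ) : |lemb₂ a y - lemb₂ b y| ≤ 4256 * |a - b| := by
  have h := Convex.norm_image_sub_le_of_norm_hasDerivWithin_le
    (f := fun x => lemb₂ x y) (f' := fun x => lemD2x x y) (s := Set.univ) (C := 4256)
    (fun x _ => (hasDerivAt_b2_x x y).hasDerivWithinAt)
    (fun x _ => by rw [Real.norm_eq_abs]; exact bound_D2x x y)
    convex_univ (Set.mem_univ b) (Set.mem_univ a)
  simpa [Real.norm_eq_abs] using h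

lemma lip_b2_y (x a b : ℝ) : |lemb₂ x a - lemb₂ x b| ≤ 4256 * |a - b| := by
  have h := Convex.norm_image_sub_le_of_norm_hasDerivWithin_le
    (f := fun y => lemb₂ x y) (f' := fun y => lemD2y x y) (s := Set.univ) (C := 4256)
    (fun y _ => (hasDerivAt_b2_y x y).hasDerivWithinAt)
    (fun y _ => by rw [Real.norm_eq_abs]; exact bound_D2y x y)
    convex_univ (Set.mem_univ b) (Set.mem_univ a)
  simpa [Real.norm_eq_abs] using h

lemma euclid_coord_le (v : EuclideanSpace ℝ (Fin 2)) (i : Fin 2) : |v i| ≤ ‖v‖ := by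
  rw [EuclideanSpace.norm_eq, Fin.sum_univ_two]
  rw [Real.le_sqrt (abs_nonneg _) (by positivity)]
  fin_cases i <;> simp [sq_abs] <;> positivity

lemma euclid_norm_le (v : EuclideanSpace ℝ (Fin 2)) : ‖v‖ ≤ |v 0| + |v 1| := by
  rw [EuclideanSpace.norm_eq, Fin.sum_univ_two]
  have h : ‖v 0‖ ^ 2 + ‖v 1‖ ^ 2 ≤ (|v 0| + |v 1|) ^ 2 := by
    simp only [Real.norm_eq_abs]
    nlinarith [abs_nonneg (v 0), abs_nonneg (v 1)]
  calc Real.sqrt (‖v 0‖ ^ 2 + ‖v 1‖ ^ 2) ≤ Real.sqrt ((|v 0| + |v 1|) ^ 2) :=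
        Real.sqrt_le_sqrt h
  _ = |v 0| + |v 1| := Real.sqrt_sq (by positivity)

/-- The Bernoulli-lemniscate vector field is globally Lipschitz on `ℝ²`
with respect to the Euclidean norm. -/
theorem lemniscate_vectorField_globally_lipschitz :
    ∃ L : ℝ, 0 ≤ L ∧ ∀ p q : EuclideanSpace ℝ (Fin 2), ‖lemb p - lemb q‖ ≤ L * ‖p - q‖ := by
  refine ⟨17024, by norm_num, fun p q => ?_⟩
  have h0 : (lemb p - lemb q) 0 = lemb₁ (p 0) (p 1) - lemb₁ (q 0) (q 1) := rfl
  have h1 : (lemb p - lemb q) 1 = lemb₂ (p 0) (p 1) - lemb₂ (q 0) (q 1) := rfl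
  have hx : |p 0 - q 0| ≤ ‖p - q‖ := by
    simpa using euclid_coord_le (p - q) 0
  have hy : |p 1 - q 1| ≤ ‖p - q‖ := by
    simpa using euclid_coord_le (p - q) 1
  have hb1 : |lemb₁ (p 0) (p 1) - lemb₁ (q 0) (q 1)| ≤ 8512 * ‖p - q‖ := by
    calc |lemb₁ (p 0) (p 1) - lemb₁ (q 0) (q 1)|
        ≤ |lemb₁ (p 0) (p 1) - lemb₁ (q 0) (p 1)| +
          |lemb₁ (q 0) (p 1) - lemb₁ (q 0) (q 1)| := abs_sub_le _ _ _
    _ ≤ 4256 * |p 0 - q 0| + 4256 * |p 1 - q 1| :=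
        add_le_add (lip_b1_x (p 1) (p 0) (q 0)) (lip_b1_y (q 0) (p 1) (q 1))
    _ ≤ 8512 * ‖p - q‖ := by nlinarith [abs_nonneg (p 0 - q 0)]
  have hb2 : |lemb₂ (p 0) (p 1) - lemb₂ (q 0) (q 1)| ≤ 8512 * ‖p - q‖ := by
    calc |lemb₂ (p 0) (p 1) - lemb₂ (q 0) (q 1)|
        ≤ |lemb₂ (p 0) (p 1) - lemb₂ (q 0) (p 1)| +
          |lemb₂ (q 0) (p 1) - lemb₂ (q 0) (q 1)| := abs_sub_le _ _ _
    _ ≤ 4256 * |p 0 - q 0| + 4256 * |p 1 - q 1| :=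
        add_le_add (lip_b2_x (p 1) (p 0) (q 0)) (lip_b2_y (q 0) (p 1) (q 1))
    _ ≤ 8512 * ‖p - q‖ := by nlinarith [abs_nonneg (p 0 - q 0)]
  calc ‖lemb p - lemb q‖ ≤ |(lemb p - lemb q) 0| + |(lemb p - lemb q) 1| :=
        euclid_norm_le _
  _ = |lemb₁ (p 0) (p 1) - lemb₁ (q 0) (q 1)| + |lemb₂ (p 0) (p 1) - lemb₂ (q 0) (q 1)| := by
        rw [h0, h1]
  _ ≤ 8512 * ‖p - q‖ + 8512 * ‖p - q‖ := add_le_add hb1 hb2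
  _ = 17024 * ‖p - q‖ := by ring
end

section
/- The planar vector field b : ℝ² → ℝ² of the Bernoulli-lemniscate system has exactly three equilibria: b(x,y) = (0,0) if and only if (x,y) ∈ {(0,0), (√2, 0), (−√2, 0)}. -/
lemma lemb_zero {a b : ℝ} (h1 : 4 * a * (a ^ 2 + b ^ 2) - 8 * a = 0)
    (h2 : 4 * b * (a ^ 2 + b ^ 2) + 8 * b = 0) : lemb₁ a b = 0 ∧ lemb₂ a b = 0 := by
  constructor
  · rw [lemb₁, h1, h2]; ring
  · rw [lemb₂, h2]
    have : -4 * a * (a ^ 2 + b ^ 2) + 8 * a = 0 := by linarith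
    rw [this]; ring

lemma lemg_pos (s : ℝ) : 0 < lemg s := by
  apply div_pos (by positivity)
  positivity

/-- The Bernoulli-lemniscate vector field has exactly three equilibria:
`(0,0)`, `(√2, 0)` and `(−√2, 0)`. -/
theorem lemniscate_equilibria (x y : ℝ) :
    (lemb₁ x y = 0 ∧ lemb₂ x y = 0) ↔
      ((x, y) = ((0 : ℝ), (0 : ℝ)) ∨ (x, y) = (Real.sqrt 2, 0) ∨
        (x, y) = (-Real.sqrt 2, 0)) := by
  have hs2 : Real.sqrt 2 ^ 2 = 2 := Real.sq_sqrt (by norm_num)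
  set f := lemf (lemI x y) with hf
  set g := lemg (lemI x y) with hg
  have hgpos : 0 < g := lemg_pos _
  constructor
  · rintro ⟨h1, h2⟩
    rw [lemb₁] at h1
    rw [lemb₂] at h2
    rw [← hf, ← hg] at h1 h2
    set u := 4 * x * (x ^ 2 + y ^ 2) - 8 * x with hu
    set v := 4 * y * (x ^ 2 + y ^ 2) + 8 * y with hv
    have h2' : -f * v + g * u = 0 := by
      rw [hu, hv]; linear_combination h2
    have husq : (f ^ 2 + g ^ 2) * u = 0 := by linear_combination (-f) * h1 + g * h2'
    have hvsq : (f ^ 2 + g ^ 2) * v = 0 := by linear_combination (-g) * h1 + (-f) * h2'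
    have hfg : f ^ 2 + g ^ 2 ≠ 0 := by positivity
    have hu0 : u = 0 := by
      rcases mul_eq_zero.mp husq with h | h
      · exact absurd h hfg
      · exact h
    have hv0 : v = 0 := by
      rcases mul_eq_zero.mp hvsq with h | h
      · exact absurd h hfg
      · exact h
    have hy : y = 0 := by
      have : y * (4 * (x ^ 2 + y ^ 2) + 8) = 0 := by rw [hv] at hv0; linarith [hv0]
      rcases mul_eq_zero.mp this with h | h
      · exact h
      · nlinarith [sq_nonneg x, sq_nonneg y]
    subst hy
    have hx : x * (x ^ 2 - 2) = 0 := by rw [hu] at hu0; nlinarith [hu0]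
    rcases mul_eq_zero.mp hx with h | h
    · left; simp [h]
    · have : (x - Real.sqrt 2) * (x + Real.sqrt 2) = 0 := by
        nlinarith [hs2]
      rcases mul_eq_zero.mp this with h' | h'
      · right; left
        have : x = Real.sqrt 2 := by linarith
        simp [this]
      · right; right
        have : x = -Real.sqrt 2 := by linarith
        simp [this]
  · rintro (h | h | h) <;>
      rw [Prod.mk.injEq] at h <;> obtain ⟨hx, hy⟩ := h <;> subst hx <;> subst hy
    · exact lemb_zero (by ring) (by ring)
    · exact lemb_zero (by linear_combination (4 * Real.sqrt 2) * hs2) (by ring)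
    · exact lemb_zero (by linear_combination (-4 * Real.sqrt 2) * hs2) (by ring)
end
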